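/- arXiv:2301.04127 — 2 statements merged into one kernel-verified Lean document; each statement's English description precedes it below -/
import Mathlib

section
/- Let (S,h) be a smooth 4-polarized lattice, let Γ := root₁(S,h), and let c₁,c₂,c₃ ∈ Γ be a triangle. Then neither the pencil P := {c₁,c₂,c₃} ∪ {l ∈ Γ : ⟨l,c₁⟩ = ⟨l,c₂⟩ = ⟨l,c₃⟩ = 0} nor any of the sets sec_i := {l ∈ Γ : ⟨l,c_j⟩ = δ_{ij}} (i = 1,2,3), regarded as simple graphs in which distinct u,v are adjacent iff ⟨u,v⟩ = 1, has a connected component isomorphic to a single edge or to a path on three vertices (no connected components of types A₂ or A₃). -/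
/-!
Common definitions: 4-polarized lattices, lines, roots, Fano graphs
(following Degtyarev–Rams, "Counting lines with Vinberg's algorithm").
-/

namespace K3

variable {S : Type*} [AddCommGroup S] [Module ℤ S]

/-- `root₁(S,h)`: the *lines* of a 4-polarized lattice. -/
def root1 (B : S →ₗ[ℤ] S →ₗ[ℤ] ℤ) (h : S) : Set S :=
  {l : S | B l l = -2 ∧ B l h = 1}

/-- `root₀(S,h)`: the *roots* of a 4-polarized lattice. -/
def root0 (B : S →ₗ[ℤ] S →ₗ[ℤ] ℤ) (h : S) : Set S :=
  {r : S | B r r = -2 ∧ B r h = 0}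

/-- `(S,B,h)` is a 4-polarized lattice: `S` is a finitely generated free ℤ-module, `B`
a symmetric bilinear form, `⟨h,h⟩ = 4`, and `⟨v,v⟩ < 0` for nonzero `v ⊥ h`. -/
structure IsPolarized (B : S →ₗ[ℤ] S →ₗ[ℤ] ℤ) (h : S) : Prop where
  free : Module.Free ℤ S
  finite : Module.Finite ℤ S
  symm : ∀ u v : S, B u v = B v u
  deg : B h h = 4
  hyperbolic : ∀ v : S, v ≠ 0 → B v h = 0 → B v v < 0

/-- Admissibility: there is no `u` with `⟨u,u⟩ = 0` and `⟨u,h⟩ = 2`. -/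
def IsAdmissible (B : S →ₗ[ℤ] S →ₗ[ℤ] ℤ) (h : S) : Prop :=
  ¬ ∃ u : S, B u u = 0 ∧ B u h = 2

/-- The E₈ Cartan matrix (Bourbaki numbering of the Dynkin diagram). -/
def e8Cartan : Matrix (Fin 8) (Fin 8) ℤ :=
  !![2,0,-1,0,0,0,0,0;
     0,2,0,-1,0,0,0,0;
     -1,0,2,-1,0,0,0,0;
     0,-1,-1,2,-1,0,0,0;
     0,0,0,-1,2,-1,0,0;
     0,0,0,0,-1,2,-1,0;
     0,0,0,0,0,-1,2,-1;
     0,0,0,0,0,0,-1,2]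

/-- The Gram matrix of `L := E₈ ⊕ E₈ ⊕ U ⊕ U ⊕ U`, where `E₈` is *negative* definite
(Gram matrix the negative of the E₈ Cartan matrix) and `U` has Gram matrix `[[0,1],[1,0]]`. -/
def LGram : Matrix (Fin 22) (Fin 22) ℤ := fun i j =>
  if hi : (i : ℕ) < 8 then
    (if hj : (j : ℕ) < 8 then -e8Cartan ⟨i, hi⟩ ⟨j, hj⟩ else 0)
  else if hi' : (i : ℕ) < 16 then
    (if hj' : 8 ≤ (j : ℕ) ∧ (j : ℕ) < 16 then
      -e8Cartan ⟨(i : ℕ) - 8, by omega⟩ ⟨(j : ℕ) - 8, by omega⟩ else 0)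
  else
    (if 16 ≤ (j : ℕ) ∧ (i : ℕ) / 2 = (j : ℕ) / 2 ∧ i ≠ j then 1 else 0)

/-- A geometric 4-polarized lattice: admissible, even, and admitting a primitive isometric
embedding into `L = 2E₈ ⊕ 3U` (primitive = the quotient by the image is torsion-free). -/
structure IsGeometric (B : S →ₗ[ℤ] S →ₗ[ℤ] ℤ) (h : S) extends IsPolarized B h : Prop where
  admissible : IsAdmissible B h
  even : ∀ v : S, Even (B v v)
  embeds : ∃ f : S →ₗ[ℤ] (Fin 22 → ℤ), Function.Injective f ∧
    (∀ u v : S, B u v = ∑ i, ∑ j, f u i * LGram i j * f v j) ∧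
    (∀ (x : Fin 22 → ℤ) (n : ℤ), n ≠ 0 → n • x ∈ LinearMap.range f →
      x ∈ LinearMap.range f)

/-- A ℤ-linear functional is *Weyl-generic* if it does not vanish on any root. -/
def WeylGeneric (B : S →ₗ[ℤ] S →ₗ[ℤ] ℤ) (h : S) (φ : S →ₗ[ℤ] ℤ) : Prop :=
  ∀ r ∈ root0 B h, φ r ≠ 0

/-- The vertex set of the Fano graph `Fn_φ(S,h)`. -/
def fanoVerts (B : S →ₗ[ℤ] S →ₗ[ℤ] ℤ) (h : S) (φ : S →ₗ[ℤ] ℤ) : Set S :=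
  {l ∈ root1 B h | ∀ r ∈ root0 B h, 0 < φ r → 0 ≤ B l r}

/-- The set `Γ` together with `h` spans `S ⊗ ℚ`; since `S` is free, this is equivalent to:
every `s : S` has a nonzero integer multiple in the ℤ-span of `Γ ∪ {h}`. -/
def QSpannedByLines (Γ : Set S) (h : S) : Prop :=
  ∀ s : S, ∃ n : ℤ, n ≠ 0 ∧ n • s ∈ Submodule.span ℤ (Γ ∪ {h})

/-- The Fano graph as a simple graph on `Γ`: distinct `u, v` adjacent iff `⟨u,v⟩ = 1`. -/
def fanoGraph (B : S →ₗ[ℤ] S →ₗ[ℤ] ℤ) (Γ : Set S) : SimpleGraph Γ where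
  Adj u v := u ≠ v ∧ B u.1 v.1 = 1 ∧ B v.1 u.1 = 1
  symm := by constructor; intro u v hadj; exact ⟨hadj.1.symm, hadj.2.2, hadj.2.1⟩
  loopless := by constructor; intro u hadj; exact hadj.1 rfl

/-- `Γ` has no separating roots: no root is positive on one element of `Γ` and negative
on another. -/
def NoSeparatingRoots (B : S →ₗ[ℤ] S →ₗ[ℤ] ℤ) (h : S) (Γ : Set S) : Prop :=
  ¬ ∃ r ∈ root0 B h, ∃ u ∈ Γ, ∃ v ∈ Γ, 0 < B r u ∧ B r v < 0

/-- A triangle in a set `Γ` of lines: three distinct elements pairwise of product `1`. -/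
def IsTriangle (B : S →ₗ[ℤ] S →ₗ[ℤ] ℤ) (Γ : Set S) (c₁ c₂ c₃ : S) : Prop :=
  c₁ ∈ Γ ∧ c₂ ∈ Γ ∧ c₃ ∈ Γ ∧ c₁ ≠ c₂ ∧ c₁ ≠ c₃ ∧ c₂ ≠ c₃ ∧
    B c₁ c₂ = 1 ∧ B c₁ c₃ = 1 ∧ B c₂ c₃ = 1

/-- Simple sections through `a` of the triangle `(a,b,c)`:
`sec a := {l ∈ Γ : ⟨l,a⟩ = 1, ⟨l,b⟩ = ⟨l,c⟩ = 0}`. -/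
def sec (B : S →ₗ[ℤ] S →ₗ[ℤ] ℤ) (Γ : Set S) (a b c : S) : Set S :=
  {l ∈ Γ | B l a = 1 ∧ B l b = 0 ∧ B l c = 0}

/-- The pencil of a triangle `(c₁,c₂,c₃)` in `Γ`. -/
def pencil (B : S →ₗ[ℤ] S →ₗ[ℤ] ℤ) (Γ : Set S) (c₁ c₂ c₃ : S) : Set S :=
  {c₁, c₂, c₃} ∪ {l ∈ Γ | B l c₁ = 0 ∧ B l c₂ = 0 ∧ B l c₃ = 0}

end K3

namespace K3

/-- A 4-polarized lattice is *smooth* if it has no roots and no `u` with `⟨u,u⟩ = 0`,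
`⟨u,h⟩ = 2`. -/
def IsSmooth {S : Type*} [AddCommGroup S] [Module ℤ S]
    (B : S →ₗ[ℤ] S →ₗ[ℤ] ℤ) (h : S) : Prop :=
  root0 B h = ∅ ∧ IsAdmissible B h

/-- `X` (with adjacency "`⟨u,v⟩ = 1`") has a connected component which is a single edge
(type `A₂`): two distinct adjacent vertices to which no other vertex of `X` is adjacent. -/
def HasA2Component {S : Type*} [AddCommGroup S] [Module ℤ S]
    (B : S →ₗ[ℤ] S →ₗ[ℤ] ℤ) (X : Set S) : Prop :=
  ∃ u ∈ X, ∃ v ∈ X, u ≠ v ∧ B u v = 1 ∧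
    ∀ w ∈ X, w ≠ u → w ≠ v → B w u ≠ 1 ∧ B w v ≠ 1

/-- `X` (with adjacency "`⟨u,v⟩ = 1`") has a connected component which is a path on three
vertices (type `A₃`). -/
def HasA3Component {S : Type*} [AddCommGroup S] [Module ℤ S]
    (B : S →ₗ[ℤ] S →ₗ[ℤ] ℤ) (X : Set S) : Prop :=
  ∃ u ∈ X, ∃ v ∈ X, ∃ w ∈ X, u ≠ v ∧ u ≠ w ∧ v ≠ w ∧
    B u v = 1 ∧ B v w = 1 ∧ B u w ≠ 1 ∧
    ∀ x ∈ X, x ≠ u → x ≠ v → x ≠ w → B x u ≠ 1 ∧ B x v ≠ 1 ∧ B x w ≠ 1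

section Aux

variable {S : Type*} [AddCommGroup S] [Module ℤ S]

/-- For an edge `{u,v}` in the residual pencil, `x = a+b+c-u-v` is a line in the residual
pencil adjacent to both `u` and `v`. -/
lemma pencil_edge_aux (B : S →ₗ[ℤ] S →ₗ[ℤ] ℤ) {h a b c u v : S}
    (symm : ∀ u v : S, B u v = B v u)
    (haa : B a a = -2) (hah : B a h = 1) (hbb : B b b = -2) (hbh : B b h = 1)
    (hcc : B c c = -2) (hch : B c h = 1)
    (hab : B a b = 1) (hac : B a c = 1) (hbc : B b c = 1)
    (huu : B u u = -2) (huh : B u h = 1) (hua : B u a = 0) (hub : B u b = 0)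
    (huc : B u c = 0)
    (hvv : B v v = -2) (hvh : B v h = 1) (hva : B v a = 0) (hvb : B v b = 0)
    (hvc : B v c = 0) (huv : B u v = 1) :
    B (a+b+c-u-v) (a+b+c-u-v) = -2 ∧ B (a+b+c-u-v) h = 1 ∧
    B (a+b+c-u-v) a = 0 ∧ B (a+b+c-u-v) b = 0 ∧ B (a+b+c-u-v) c = 0 ∧
    B (a+b+c-u-v) u = 1 ∧ B (a+b+c-u-v) v = 1 := by
  simp only [map_add, map_sub, LinearMap.add_apply, LinearMap.sub_apply]
  refine ⟨?_, ?_, ?_, ?_, ?_, ?_, ?_⟩ <;>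
    linarith [symm a b, symm a c, symm b c, symm a u, symm b u, symm c u,
      symm a v, symm b v, symm c v, symm u v]

/-- For an edge `{u,v}` in `sec a b c`, `x = h-a-u-v` is a line in `sec a b c`
adjacent to both `u` and `v`. -/
lemma sec_edge_aux (B : S →ₗ[ℤ] S →ₗ[ℤ] ℤ) {h a b c u v : S}
    (symm : ∀ u v : S, B u v = B v u) (hdeg : B h h = 4)
    (haa : B a a = -2) (hah : B a h = 1)
    (hab : B a b = 1) (hac : B a c = 1)
    (hbh : B b h = 1) (hch : B c h = 1)
    (huu : B u u = -2) (huh : B u h = 1) (hua : B u a = 1) (hub : B u b = 0)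
    (huc : B u c = 0)
    (hvv : B v v = -2) (hvh : B v h = 1) (hva : B v a = 1) (hvb : B v b = 0)
    (hvc : B v c = 0) (huv : B u v = 1) :
    B (h-a-u-v) (h-a-u-v) = -2 ∧ B (h-a-u-v) h = 1 ∧
    B (h-a-u-v) a = 1 ∧ B (h-a-u-v) b = 0 ∧ B (h-a-u-v) c = 0 ∧
    B (h-a-u-v) u = 1 ∧ B (h-a-u-v) v = 1 := by
  simp only [map_sub, LinearMap.sub_apply]
  refine ⟨?_, ?_, ?_, ?_, ?_, ?_, ?_⟩ <;>
    linarith [symm a h, symm u h, symm v h, symm a u, symm a v, symm u v,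
      symm b h, symm c h, symm a b, symm a c, symm u a, symm v a,
      symm u b, symm v b, symm u c, symm v c]

/-- No `A₂` or `A₃` components in a section. -/
lemma noA2A3_sec (B : S →ₗ[ℤ] S →ₗ[ℤ] ℤ) (h : S)
    (symm : ∀ u v : S, B u v = B v u) (hdeg : B h h = 4)
    {a b c : S} (ha : a ∈ root1 B h) (hb : b ∈ root1 B h) (hc : c ∈ root1 B h)
    (hab : B a b = 1) (hac : B a c = 1) :
    ¬ HasA2Component B (sec B (root1 B h) a b c) ∧
    ¬ HasA3Component B (sec B (root1 B h) a b c) := by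
  obtain ⟨haa, hah⟩ := ha
  obtain ⟨hbb, hbh⟩ := hb
  obtain ⟨hcc, hch⟩ := hc
  -- the key construction
  have key : ∀ u v : S, u ∈ sec B (root1 B h) a b c → v ∈ sec B (root1 B h) a b c →
      B u v = 1 →
      (h-a-u-v) ∈ sec B (root1 B h) a b c ∧ B (h-a-u-v) u = 1 ∧ B (h-a-u-v) v = 1 := by
    intro u v hu hv huv
    obtain ⟨⟨huu, huh⟩, hua, hub, huc⟩ := hu
    obtain ⟨⟨hvv, hvh⟩, hva, hvb, hvc⟩ := hv
    obtain ⟨h1, h2, h3, h4, h5, h6, h7⟩ :=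
      sec_edge_aux B symm hdeg haa hah hab hac hbh hch huu huh hua hub huc
        hvv hvh hva hvb hvc huv
    exact ⟨⟨⟨h1, h2⟩, h3, h4, h5⟩, h6, h7⟩
  constructor
  · rintro ⟨u, hu, v, hv, hne, huv, hmax⟩
    obtain ⟨hx, hxu, hxv⟩ := key u v hu hv huv
    have huu : B u u = -2 := hu.1.1
    have hvv : B v v = -2 := hv.1.1
    have hxu' : h-a-u-v ≠ u := by intro e; rw [e] at hxu; omega
    have hxv' : h-a-u-v ≠ v := by intro e; rw [e] at hxv; omega
    exact (hmax _ hx hxu' hxv').1 hxu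
  · rintro ⟨u, hu, v, hv, w, hw, huv', huw', hvw', huv, hvw, huw, hmax⟩
    obtain ⟨hx, hxu, hxv⟩ := key u v hu hv huv
    have huu : B u u = -2 := hu.1.1
    have hvv : B v v = -2 := hv.1.1
    have hxu' : h-a-u-v ≠ u := by intro e; rw [e] at hxu; omega
    have hxv' : h-a-u-v ≠ v := by intro e; rw [e] at hxv; omega
    have hxw' : h-a-u-v ≠ w := by
      intro e; rw [e] at hxu; exact huw (by rw [symm u w]; exact hxu)
    exact (hmax _ hx hxu' hxv' hxw').1 hxu

/-- No `A₂` or `A₃` components in the pencil. -/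
lemma noA2A3_pencil (B : S →ₗ[ℤ] S →ₗ[ℤ] ℤ) (h : S)
    (symm : ∀ u v : S, B u v = B v u)
    {a b c : S} (hT : IsTriangle B (root1 B h) a b c) :
    ¬ HasA2Component B (pencil B (root1 B h) a b c) ∧
    ¬ HasA3Component B (pencil B (root1 B h) a b c) := by
  obtain ⟨ha, hb, hc, hab', hac', hbc', hab, hac, hbc⟩ := hT
  obtain ⟨haa, hah⟩ := ha
  obtain ⟨hbb, hbh⟩ := hb
  obtain ⟨hcc, hch⟩ := hc
  have hmemP : ∀ x : S, (x = a ∨ x = b ∨ x = c) ∨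
      (x ∈ root1 B h ∧ B x a = 0 ∧ B x b = 0 ∧ B x c = 0) ↔
      x ∈ pencil B (root1 B h) a b c := by
    intro x
    simp [pencil, Set.mem_union, Set.mem_insert_iff, Set.mem_setOf_eq, root1]
  -- membership in the residual part
  have hres : ∀ x : S, x ∈ root1 B h → B x a = 0 → B x b = 0 → B x c = 0 →
      x ∈ pencil B (root1 B h) a b c := by
    intro x h1 h2 h3 h4
    exact Set.mem_union_right _ ⟨h1, h2, h3, h4⟩
  have hmemT : ∀ x : S, x = a ∨ x = b ∨ x = c → x ∈ pencil B (root1 B h) a b c := by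
    intro x hx
    apply Set.mem_union_left
    rcases hx with rfl | rfl | rfl <;> simp
  -- pairs within the triangle pair to 1
  have hTpair : ∀ x y : S, (x = a ∨ x = b ∨ x = c) → (y = a ∨ y = b ∨ y = c) →
      x ≠ y → B x y = 1 := by
    intro x y hx hy hxy
    rcases hx with rfl | rfl | rfl <;> rcases hy with rfl | rfl | rfl <;>
      first
        | exact absurd rfl hxy
        | assumption
        | (rw [symm]; assumption)
  -- an edge between a triangle vertex and a residual vertex is impossible
  have hnoMixed : ∀ x y : S, (x = a ∨ x = b ∨ x = c) →
      (y ∈ root1 B h ∧ B y a = 0 ∧ B y b = 0 ∧ B y c = 0) → B x y ≠ 1 := by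
    intro x y hx ⟨_, h1, h2, h3⟩
    rcases hx with rfl | rfl | rfl <;> rw [symm] <;> omega
  have key : ∀ u v : S,
      (u ∈ root1 B h ∧ B u a = 0 ∧ B u b = 0 ∧ B u c = 0) →
      (v ∈ root1 B h ∧ B v a = 0 ∧ B v b = 0 ∧ B v c = 0) →
      B u v = 1 →
      (a+b+c-u-v) ∈ pencil B (root1 B h) a b c ∧
        B (a+b+c-u-v) u = 1 ∧ B (a+b+c-u-v) v = 1 := by
    intro u v hu hv huv
    obtain ⟨⟨huu, huh⟩, hua, hub, huc⟩ := hu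
    obtain ⟨⟨hvv, hvh⟩, hva, hvb, hvc⟩ := hv
    obtain ⟨h1, h2, h3, h4, h5, h6, h7⟩ :=
      pencil_edge_aux B symm haa hah hbb hbh hcc hch hab hac hbc
        huu huh hua hub huc hvv hvh hva hvb hvc huv
    exact ⟨hres _ ⟨h1, h2⟩ h3 h4 h5, h6, h7⟩
  constructor
  · rintro ⟨u, hu, v, hv, hne, huv, hmax⟩
    rw [← hmemP] at hu hv
    rcases hu with hu | hu
    · rcases hv with hv | hv
      · -- both are triangle vertices; the third triangle vertex is an extra neighbour
        have : ∃ w : S, (w = a ∨ w = b ∨ w = c) ∧ w ≠ u ∧ w ≠ v := by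
          rcases hu with rfl | rfl | rfl <;> rcases hv with rfl | rfl | rfl <;>
            first
              | exact absurd rfl hne
              | exact ⟨a, Or.inl rfl, by tauto, by tauto⟩
              | exact ⟨b, Or.inr (Or.inl rfl), by tauto, by tauto⟩
              | exact ⟨c, Or.inr (Or.inr rfl), by tauto, by tauto⟩
        obtain ⟨w, hwT, hwu, hwv⟩ := this
        exact (hmax w (hmemT w hwT) hwu hwv).1 (hTpair w u hwT hu hwu)
      · exact hnoMixed u v hu hv huv
    · rcases hv with hv | hv
      · exact hnoMixed v u hv hu (by rw [symm]; exact huv)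
      · obtain ⟨hx, hxu, hxv⟩ := key u v hu hv huv
        have huu : B u u = -2 := hu.1.1
        have hvv : B v v = -2 := hv.1.1
        have hxu' : a+b+c-u-v ≠ u := by intro e; rw [e] at hxu; omega
        have hxv' : a+b+c-u-v ≠ v := by intro e; rw [e] at hxv; omega
        exact (hmax _ hx hxu' hxv').1 hxu
  · rintro ⟨u, hu, v, hv, w, hw, huv', huw', hvw', huv, hvw, huw, hmax⟩
    rw [← hmemP] at hu hv hw
    rcases hv with hv | hv
    · -- v is a triangle vertex, so u and w are too, but then B u w = 1
      rcases hu with hu | hu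
      · rcases hw with hw | hw
        · exact huw (hTpair u w hu hw huw')
        · exact hnoMixed v w hv hw hvw
      · exact hnoMixed v u hv hu (by rw [symm]; exact huv)
    · rcases hu with hu | hu
      · exact hnoMixed u v hu hv huv
      · rcases hw with hw | hw
        · exact hnoMixed w v hw hv (by rw [symm]; exact hvw)
        · obtain ⟨hx, hxu, hxv⟩ := key u v hu hv huv
          have huu : B u u = -2 := hu.1.1
          have hvv : B v v = -2 := hv.1.1
          have hxu' : a+b+c-u-v ≠ u := by intro e; rw [e] at hxu; omega
          have hxv' : a+b+c-u-v ≠ v := by intro e; rw [e] at hxv; omega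
          have hxw' : a+b+c-u-v ≠ w := by
            intro e; rw [e] at hxu; exact huw (by rw [symm u w]; exact hxu)
          exact (hmax _ hx hxu' hxv' hxw').1 hxu

end Aux

/-- Lemma 4.1(2). In a smooth 4-polarized lattice, for a triangle
`c₁,c₂,c₃` in `Γ := root₁(S,h)`, neither the pencil nor any of the sets `sec_i` has a
connected component of type `A₂` or `A₃`. -/
theorem smooth_no_A2_A3_components
    {S : Type*} [AddCommGroup S] [Module ℤ S]
    (B : S →ₗ[ℤ] S →ₗ[ℤ] ℤ) (h : S)
    (hpol : IsPolarized B h) (hsm : IsSmooth B h)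
    (c₁ c₂ c₃ : S) (htri : IsTriangle B (root1 B h) c₁ c₂ c₃) :
    ¬ HasA2Component B (pencil B (root1 B h) c₁ c₂ c₃) ∧
    ¬ HasA3Component B (pencil B (root1 B h) c₁ c₂ c₃) ∧
    ¬ HasA2Component B (sec B (root1 B h) c₁ c₂ c₃) ∧
    ¬ HasA3Component B (sec B (root1 B h) c₁ c₂ c₃) ∧
    ¬ HasA2Component B (sec B (root1 B h) c₂ c₁ c₃) ∧
    ¬ HasA3Component B (sec B (root1 B h) c₂ c₁ c₃) ∧
    ¬ HasA2Component B (sec B (root1 B h) c₃ c₁ c₂) ∧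
    ¬ HasA3Component B (sec B (root1 B h) c₃ c₁ c₂) := by
  have symm := hpol.symm
  have hdeg := hpol.deg
  obtain ⟨h1, h2, h3, h12, h13, h23, hB12, hB13, hB23⟩ := htri
  have hP := noA2A3_pencil B h symm ⟨h1, h2, h3, h12, h13, h23, hB12, hB13, hB23⟩
  have hS1 := noA2A3_sec B h symm hdeg h1 h2 h3 hB12 hB13
  have hS2 := noA2A3_sec B h symm hdeg h2 h1 h3 (by rw [symm]; exact hB12) hB23
  have hS3 := noA2A3_sec B h symm hdeg h3 h1 h2 (by rw [symm]; exact hB13)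
    (by rw [symm]; exact hB23)
  exact ⟨hP.1, hP.2, hS1.1, hS1.2, hS2.1, hS2.2, hS3.1, hS3.2⟩

end K3
end

section
/- Let (S,h) be a 4-polarized lattice and c ∈ root₁(S,h). Then the bilinear form is negative semidefinite on the ℚ-span (inside S ⊗ ℚ) of the set {l ∈ root₁(S,h) : ⟨l,c⟩ = 1} of all lines meeting c (every vector in this span has non-positive square). In particular, for any vertex c of the Fano graph, the set of lines intersecting c spans an elliptic or parabolic sublattice. -/
namespace K3

/-- equation (2.7). In a 4-polarized lattice, for any line `c`, the
form is negative semidefinite on the ℚ-span of the set of all lines meeting `c`.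
(Negative semidefiniteness on the ℚ-span of a subset of `S` is equivalent to negative
semidefiniteness on its ℤ-span, by clearing denominators.) -/
theorem lines_meeting_a_line_span_semidefinite
    {S : Type*} [AddCommGroup S] [Module ℤ S]
    (B : S →ₗ[ℤ] S →ₗ[ℤ] ℤ) (h : S)
    (hpol : IsPolarized B h)
    (c : S) (hc : c ∈ root1 B h) :
    ∀ v ∈ Submodule.span ℤ {l ∈ root1 B h | B l c = 1}, B v v ≤ 0 := by
  intro v hv
  have key : B v h = B v c := by
    induction hv using Submodule.span_induction with
    | mem x hx => rw [hx.1.2, hx.2]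
    | zero => simp
    | add x y hx hy ihx ihy => simp only [map_add, LinearMap.add_apply]; omega
    | smul n x hx ih => simp only [map_smul, LinearMap.smul_apply, smul_eq_mul, ih]
  set a := B v h with ha
  set w : S := (3:ℤ) • v + a • c - a • h with hw
  have hch : B c h = 1 := hc.2
  have hcc : B c c = -2 := hc.1
  have hhc : B h c = 1 := by rw [hpol.symm h c, hch]
  have hcv : B c v = B v c := hpol.symm c v
  have hhv : B h v = B v h := hpol.symm h v
  have hwh : B w h = 0 := by
    simp only [hw, map_sub, map_add, map_zsmul, LinearMap.sub_apply, LinearMap.add_apply,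
      LinearMap.smul_apply, smul_eq_mul, hch, hpol.deg, ← ha]
    ring
  have hww : B w w ≤ 0 := by
    rcases eq_or_ne w 0 with h0 | h0
    · simp [h0]
    · exact le_of_lt (hpol.hyperbolic w h0 hwh)
  have expand : B w w = 9 * B v v := by
    simp only [hw, map_sub, map_add, map_zsmul, LinearMap.sub_apply, LinearMap.add_apply,
      LinearMap.smul_apply, smul_eq_mul, hch, hhc, hcc, hpol.deg, hcv, hhv, ← key, ← ha]
    ring
  linarith [expand ▸ hww]

end K3
end
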